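/- Let a₁,...,aₙ be complemented commuting elements of a semiring R. Then (a₁+...+aₙ)(a₁∨...∨aₙ) = a₁+...+aₙ, where ∨ is the join of the Boolean algebra C(R) defined by r ∨ s = r + r′s. Moreover, if aᵢaⱼ = 0 for all i ≠ j, then a₁+...+aₙ = a₁∨...∨aₙ. -/

import Mathlib

/-- Sum `a₁ + ⋯ + aₙ` of a list of pairs `(aᵢ, aᵢ′)` (each element together with its
complement), summing the first components. -/
def sumC {R : Type} [Semiring R] : List (R × R) → R
  | [] => 0
  | p :: l => p.1 + sumC l

/-- Join `a₁ ∨ ⋯ ∨ aₙ` in the Boolean algebra `C(R)` of complemented commuting elements,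
where `r ∨ s = r + r′s`, computed on a list of pairs `(aᵢ, aᵢ′)` of elements with their
complements. -/
def joinC {R : Type} [Semiring R] : List (R × R) → R
  | [] => 0
  | p :: l => p.1 + p.2 * joinC l

lemma mul_sumC_eq_zero {R : Type} [Semiring R] (a : R) :
    ∀ l : List (R × R), (∀ p ∈ l, a * p.1 = 0) → a * sumC l = 0
  | [], _ => by simp [sumC]
  | p :: l, h => by
    have h1 := h p List.mem_cons_self
    have h2 := mul_sumC_eq_zero a l (fun q hq => h q (List.mem_cons_of_mem p hq))
    simp [sumC, mul_add, h1, h2]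

/-- Let `a₁,…,aₙ` be complemented commuting elements of a semiring `R` (each `aᵢ` given
with its complement `aᵢ′`). Then `(a₁+⋯+aₙ)(a₁∨⋯∨aₙ) = a₁+⋯+aₙ`, and if moreover
`aᵢaⱼ = 0` for all `i ≠ j`, then `a₁+⋯+aₙ = a₁∨⋯∨aₙ`. -/
theorem sum_join_complemented_commuting {R : Type} [Semiring R]
    (l : List (R × R))
    (h : ∀ p ∈ l, p.1 + p.2 = 1 ∧ p.1 * p.2 = 0 ∧ ∀ t : R, p.1 * t = t * p.1) :
    sumC l * joinC l = sumC l ∧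
      (l.Pairwise (fun p q => p.1 * q.1 = 0) → sumC l = joinC l) := by
  induction l with
  | nil => simp [sumC, joinC]
  | cons p l IH =>
    obtain ⟨h1, h2, hc⟩ := h p List.mem_cons_self
    obtain ⟨IH1, IH2⟩ := IH (fun q hq => h q (List.mem_cons_of_mem p hq))
    have hidem : p.1 * p.1 = p.1 := by
      calc p.1 * p.1 = p.1 * p.1 + p.1 * p.2 := by rw [h2, add_zero]
        _ = p.1 * (p.1 + p.2) := by rw [mul_add]
        _ = p.1 := by rw [h1, mul_one]
    have hSa : sumC l * p.1 * joinC l = sumC l * p.1 := by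
      rw [← hc (sumC l), mul_assoc, IH1]
    constructor
    · show (p.1 + sumC l) * (p.1 + p.2 * joinC l) = p.1 + sumC l
      rw [add_mul, mul_add, mul_add, hidem, ← mul_assoc p.1 p.2, h2, zero_mul, add_zero]
      have hkey : sumC l * p.1 + sumC l * (p.2 * joinC l) = sumC l := by
        calc sumC l * p.1 + sumC l * (p.2 * joinC l)
            = sumC l * p.1 * joinC l + sumC l * p.2 * joinC l := by rw [hSa, mul_assoc]
          _ = sumC l * (p.1 + p.2) * joinC l := by rw [mul_add, add_mul]
          _ = sumC l := by rw [h1, mul_one, IH1]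
      rw [hkey]
    · intro hpw
      rw [List.pairwise_cons] at hpw
      obtain ⟨ha, hpl⟩ := hpw
      have hS0 : p.1 * sumC l = 0 := mul_sumC_eq_zero p.1 l ha
      have hstep : sumC l = p.2 * sumC l := by
        have h' : (p.1 + p.2) * sumC l = sumC l := by rw [h1, one_mul]
        rw [add_mul, hS0, zero_add] at h'
        exact h'.symm
      show p.1 + sumC l = p.1 + p.2 * joinC l
      rw [hstep, IH2 hpl]
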